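/- arXiv:2104.14672 — 2 statements merged into one kernel-verified Lean document; each statement's English description precedes it below -/
import Mathlib

section
/- Let relu : ℝ → ℝ be defined by relu(y) = max(0, y). Let y₀ ∈ ℝ and let Y ⊆ ℝ be a set such that the set {y ∈ Y | y ≠ y₀} is nonempty and has a greatest element ȳ. Then the set { |relu(y) − relu(y₀)| / |y − y₀| : y ∈ Y, y ≠ y₀ } has greatest element (relu(ȳ) − relu(y₀)) / (ȳ − y₀); in particular the local Lipschitz constant of relu at y₀ over Y equals (relu(ȳ) − relu(y₀)) / (ȳ − y₀). -/
lemma relu_ratio_abs (a b : ℝ) (h : a ≠ b) :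
    (max 0 a - max 0 b) / (a - b) = |max 0 a - max 0 b| / |a - b| := by
  rw [← abs_div, abs_of_nonneg]
  rcases h.lt_or_gt with h' | h'
  · exact div_nonneg_iff.mpr (Or.inr ⟨by simp [max_le_max le_rfl h'.le], by linarith⟩)
  · exact div_nonneg (by simp [max_le_max le_rfl h'.le]) (by linarith)

lemma relu_lip (a b : ℝ) : |max 0 a - max 0 b| ≤ |a - b| := by
  simpa [max_comm] using abs_max_sub_max_le_abs a b 0

lemma relu_key (c a b : ℝ) (hab : a ≤ b) :
    |max 0 a - max 0 c| * |b - c| ≤ |max 0 b - max 0 c| * |a - c| := by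
  rcases le_total c 0 with hc | hc
  · rcases le_total b 0 with hb | hb
    · simp [max_eq_left hb, max_eq_left (hab.trans hb), max_eq_left hc]
    · have hcm : max 0 c = 0 := max_eq_left hc
      have hbm : max 0 b = b := max_eq_right hb
      rcases le_total a 0 with ha | ha
      · simp only [max_eq_left ha, hcm, hbm, sub_zero, abs_zero, zero_mul]
        positivity
      · have ham : max 0 a = a := max_eq_right ha
        rw [ham, hbm, hcm, sub_zero, sub_zero, abs_of_nonneg ha, abs_of_nonneg hb,
          abs_of_nonneg (show (0:ℝ) ≤ b - c by linarith),
          abs_of_nonneg (show (0:ℝ) ≤ a - c by linarith)]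
        nlinarith
  · have hcm : max 0 c = c := max_eq_right hc
    rcases le_total 0 b with hb | hb
    · have hlip := relu_lip a c
      rw [hcm] at hlip ⊢
      rw [max_eq_right hb]
      calc |max 0 a - c| * |b - c| ≤ |a - c| * |b - c| :=
            mul_le_mul_of_nonneg_right hlip (abs_nonneg _)
        _ = |b - c| * |a - c| := mul_comm _ _
    · have hbm : max 0 b = 0 := max_eq_left hb
      have ham : max 0 a = 0 := max_eq_left (hab.trans hb)
      rw [ham, hbm, hcm, zero_sub, abs_neg, abs_of_nonneg hc,
        abs_of_nonpos (show b - c ≤ 0 by linarith),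
        abs_of_nonpos (show a - c ≤ 0 by linarith)]
      nlinarith

theorem relu_local_lipschitz_constant
    (y₀ : ℝ) (Y : Set ℝ) (ybar : ℝ)
    (hybar : IsGreatest {y ∈ Y | y ≠ y₀} ybar) :
    IsGreatest {L : ℝ | ∃ y ∈ Y, y ≠ y₀ ∧ L = |max 0 y - max 0 y₀| / |y - y₀|}
      ((max 0 ybar - max 0 y₀) / (ybar - y₀)) := by
  obtain ⟨⟨hYb, hbne⟩, hub⟩ := hybar
  constructor
  · exact ⟨ybar, hYb, hbne, relu_ratio_abs _ _ hbne⟩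
  · rintro L ⟨y, hyY, hne, rfl⟩
    have hy : y ≤ ybar := hub ⟨hyY, hne⟩
    rw [relu_ratio_abs _ _ hbne]
    rw [div_le_div_iff₀ (abs_pos.mpr (sub_ne_zero.mpr hne))
        (abs_pos.mpr (sub_ne_zero.mpr hbne))]
    exact relu_key y₀ y ybar hy
end

section
/- Let k and s be positive integers. For p ∈ ℤ, let N(p) be the number of integers t such that t·s ≤ p < t·s + k (the number of kernel placements, at stride s and kernel size k, whose pooling region covers position p). Then the set { N(p) : p ∈ ℤ } has greatest element ⌈k / s⌉ (the ceiling of k/s). Consequently, for a 2D max pooling function with kernel size k and stride s in each dimension, the maximum number of pooling regions any input element is part of is n_max = ⌈k/s⌉². -/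
/-- The number of kernel placements (stride `s`, kernel size `k`) whose pooling
region covers position `p`: the number of integers `t` with `t·s ≤ p < t·s + k`. -/
noncomputable def coverCount (k s : ℕ) (p : ℤ) : ℕ :=
  Set.ncard {t : ℤ | t * (s : ℤ) ≤ p ∧ p < t * (s : ℤ) + (k : ℤ)}

lemma coverCount_eq (k s : ℕ) (hs : 0 < s) (p : ℤ) :
    coverCount k s p = (p / (s : ℤ) - (p - k) / (s : ℤ)).toNat := by
  have hs' : (0 : ℤ) < (s : ℤ) := by exact_mod_cast hs
  have hset : {t : ℤ | t * (s : ℤ) ≤ p ∧ p < t * (s : ℤ) + (k : ℤ)}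
      = (Finset.Icc ((p - k) / (s : ℤ) + 1) (p / (s : ℤ)) : Finset ℤ) := by
    ext t
    simp only [Set.mem_setOf_eq, Finset.coe_Icc, Set.mem_Icc]
    constructor
    · rintro ⟨h1, h2⟩
      refine ⟨Int.add_one_le_of_lt ?_, ?_⟩
      · rw [Int.ediv_lt_iff_lt_mul hs']
        omega
      · rw [Int.le_ediv_iff_mul_le hs']
        exact h1
    · rintro ⟨h1, h2⟩
      rw [Int.le_ediv_iff_mul_le hs'] at h2
      have h1' : (p - k) / (s : ℤ) < t := by omega
      rw [Int.ediv_lt_iff_lt_mul hs'] at h1'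
      exact ⟨h2, by omega⟩
  rw [coverCount, hset, Set.ncard_coe_finset, Int.card_Icc]
  congr 1
  ring

lemma coverCount_le (k s : ℕ) (hk : 0 < k) (hs : 0 < s) (p : ℤ) :
    coverCount k s p ≤ k ⌈/⌉ s := by
  have hs' : (0 : ℤ) < (s : ℤ) := by exact_mod_cast hs
  rw [coverCount_eq k s hs p]
  set c : ℕ := k ⌈/⌉ s with hc
  have hks : k ≤ s * c := le_smul_ceilDiv hs
  have key : p / (s : ℤ) ≤ (p - k) / (s : ℤ) + c := by
    have : (p - k) / (s : ℤ) + c = (p - k + c * s) / (s : ℤ) := by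
      rw [Int.add_mul_ediv_right _ _ (by omega : (s : ℤ) ≠ 0)]
    rw [this]
    apply Int.ediv_le_ediv hs'
    have : (k : ℤ) ≤ (c : ℤ) * (s : ℤ) := by
      have := hks
      push_cast
      nlinarith [hks]
    omega
  omega

lemma coverCount_max (k s : ℕ) (hk : 0 < k) (hs : 0 < s) :
    coverCount k s ((k : ℤ) - 1) = k ⌈/⌉ s := by
  have hs' : (0 : ℤ) < (s : ℤ) := by exact_mod_cast hs
  rw [coverCount_eq k s hs]
  have h1 : ((k : ℤ) - 1 - k) / (s : ℤ) = -1 := by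
    have : ((k : ℤ) - 1 - k) = -1 := by ring
    rw [this]
    have h : (-1 : ℤ) = ((s : ℤ) - 1) + (-1) * (s : ℤ) := by ring
    rw [h, Int.add_mul_ediv_right _ _ (by omega : (s : ℤ) ≠ 0),
      Int.ediv_eq_zero_of_lt (by omega) (by omega)]
    omega
  rw [h1]
  have h2 : ((k : ℤ) - 1) / (s : ℤ) = ((k - 1) / s : ℕ) := by
    push_cast [Int.natCast_ediv]
    congr 1
    omega
  rw [h2]
  have h3 : k ⌈/⌉ s = (k - 1) / s + 1 := by
    rw [Nat.ceilDiv_eq_add_pred_div]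
    have : k + s - 1 = (k - 1) + s := by omega
    rw [this, Nat.add_div_right _ hs]
  omega

theorem maxpool_cover_count
    (k s : ℕ) (hk : 0 < k) (hs : 0 < s) :
    IsGreatest {c : ℕ | ∃ p : ℤ, c = coverCount k s p} (k ⌈/⌉ s) ∧
      IsGreatest {c : ℕ | ∃ p q : ℤ, c = coverCount k s p * coverCount k s q}
        ((k ⌈/⌉ s) ^ 2) := by
  constructor
  · constructor
    · exact ⟨(k : ℤ) - 1, (coverCount_max k s hk hs).symm⟩
    · rintro c ⟨p, rfl⟩
      exact coverCount_le k s hk hs p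
  · constructor
    · refine ⟨(k : ℤ) - 1, (k : ℤ) - 1, ?_⟩
      rw [coverCount_max k s hk hs, sq]
    · rintro c ⟨p, q, rfl⟩
      rw [sq]
      exact Nat.mul_le_mul (coverCount_le k s hk hs p) (coverCount_le k s hk hs q)
end
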